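/- For every positive integer k, m(k, 2) = 2k; that is, the smallest number of vertices of a simple graph containing at least 2 distinct k-dominating independent sets is exactly 2k. -/

import Mathlib

open SimpleGraph

/-- `D` is a `k`-dominating independent set of `G`: `D` is independent and every vertex
outside `D` has at least `k` neighbours in `D`. -/
def IsKDIS {V : Type*} [Fintype V] (G : SimpleGraph V) (k : ℕ) (D : Finset V) : Prop :=
  (∀ x ∈ D, ∀ y ∈ D, ¬ G.Adj x y) ∧
  ∀ v : V, v ∉ D → k ≤ (G.neighborSet v ∩ (D : Set V)).ncard

/-- The number of `k`-dominating independent sets of `G`. -/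
noncomputable def numKDIS {V : Type*} [Fintype V] (G : SimpleGraph V) (k : ℕ) : ℕ :=
  Nat.card {D : Finset V // IsKDIS G k D}

/-- `mi k n`: the maximum number of `k`-dominating independent sets in a simple graph
on `n` vertices. -/
noncomputable def mi (k n : ℕ) : ℕ :=
  sSup {m : ℕ | ∃ G : SimpleGraph (Fin n), numKDIS G k = m}

/-- `mDIS k t`: the smallest `n` such that some simple graph on `n` vertices has at least
`t` `k`-dominating independent sets. -/
noncomputable def mDIS (k t : ℕ) : ℕ :=
  sInf {n : ℕ | ∃ G : SimpleGraph (Fin n), t ≤ numKDIS G k}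

lemma step_lem {V : Type*} [Fintype V] [DecidableEq V] {G : SimpleGraph V} {k : ℕ}
    {D1 D2 : Finset V} (h1 : IsKDIS G k D1) (h2 : IsKDIS G k D2)
    {v : V} (hv1 : v ∈ D1) (hv2 : v ∉ D2) : k ≤ (D2 \ D1).card := by
  have hsub : G.neighborSet v ∩ (D2 : Set V) ⊆ ((D2 \ D1 : Finset V) : Set V) := by
    rintro u ⟨hadj, hu2⟩
    simp only [Finset.coe_sdiff, Set.mem_diff, Finset.mem_coe]
    exact ⟨hu2, fun hu1 => h1.1 v hv1 u hu1 hadj⟩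
  calc k ≤ (G.neighborSet v ∩ (D2 : Set V)).ncard := h2.2 v hv2
    _ ≤ ((D2 \ D1 : Finset V) : Set V).ncard :=
        Set.ncard_le_ncard hsub (Finset.finite_toSet _)
    _ = (D2 \ D1).card := Set.ncard_coe_finset _

lemma key_lem {V : Type*} [Fintype V] [DecidableEq V] {G : SimpleGraph V} {k : ℕ} (hk : 1 ≤ k)
    {D1 D2 : Finset V} (h1 : IsKDIS G k D1) (h2 : IsKDIS G k D2) (hne : D1 ≠ D2) :
    2 * k ≤ Fintype.card V := by
  have main : k ≤ (D1 \ D2).card ∧ k ≤ (D2 \ D1).card := by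
    by_cases h : ∃ v ∈ D1, v ∉ D2
    · obtain ⟨v, hv1, hv2⟩ := h
      have hb := step_lem h1 h2 hv1 hv2
      obtain ⟨u, hu⟩ : (D2 \ D1).Nonempty := Finset.card_pos.mp (lt_of_lt_of_le hk hb)
      rw [Finset.mem_sdiff] at hu
      exact ⟨step_lem h2 h1 hu.1 hu.2, hb⟩
    · push_neg at h
      have hsub : D1 ⊆ D2 := h
      have : ∃ u ∈ D2, u ∉ D1 := by
        by_contra hc
        push_neg at hc
        exact hne (Finset.Subset.antisymm hsub hc)
      obtain ⟨u, hu2, hu1⟩ := this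
      have ha := step_lem h2 h1 hu2 hu1
      obtain ⟨w, hw⟩ : (D1 \ D2).Nonempty := Finset.card_pos.mp (lt_of_lt_of_le hk ha)
      rw [Finset.mem_sdiff] at hw
      exact ⟨ha, step_lem h1 h2 hw.1 hw.2⟩
  have hdisj : Disjoint (D1 \ D2) (D2 \ D1) := by
    exact disjoint_sdiff_sdiff
  calc 2 * k = k + k := two_mul k
    _ ≤ (D1 \ D2).card + (D2 \ D1).card := Nat.add_le_add main.1 main.2
    _ = ((D1 \ D2) ∪ (D2 \ D1)).card := (Finset.card_union_of_disjoint hdisj).symm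
    _ ≤ Fintype.card V := by
        rw [← Finset.card_univ]; exact Finset.card_le_univ _

def G0 (k : ℕ) : SimpleGraph (Fin (2 * k)) where
  Adj i j := ((i : ℕ) < k) ↔ ¬ ((j : ℕ) < k)
  symm := ⟨by intro i j h; tauto⟩
  loopless := ⟨by intro i h; tauto⟩

lemma cardA (k : ℕ) :
    (Finset.univ.filter (fun i : Fin (2 * k) => (i : ℕ) < k)).card = k := by
  have he : (Finset.univ.filter (fun i : Fin (2 * k) => (i : ℕ) < k)) =
      (Finset.range k).attachFin (fun m hm => by rw [Finset.mem_range] at hm; omega) := by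
    ext i
    simp [Finset.mem_attachFin, Finset.mem_range]
  rw [he, Finset.card_attachFin, Finset.card_range]

lemma DA_isKDIS (k : ℕ) :
    IsKDIS (G0 k) k (Finset.univ.filter (fun i : Fin (2 * k) => (i : ℕ) < k)) := by
  constructor
  · intro x hx y hy
    simp only [Finset.mem_filter] at hx hy
    simp only [G0]
    tauto
  · intro v hv
    simp only [Finset.mem_filter, Finset.mem_univ, true_and] at hv
    have hset : (G0 k).neighborSet v ∩
        ((Finset.univ.filter (fun i : Fin (2 * k) => (i : ℕ) < k) : Finset _) : Set _) =
        ((Finset.univ.filter (fun i : Fin (2 * k) => (i : ℕ) < k) : Finset _) : Set _) := by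
      ext u
      simp only [Set.mem_inter_iff, mem_neighborSet, Finset.coe_filter, Set.mem_setOf_eq,
        Finset.mem_univ, true_and, G0]
      tauto
    rw [hset, Set.ncard_coe_finset, cardA]

lemma DB_isKDIS (k : ℕ) :
    IsKDIS (G0 k) k (Finset.univ.filter (fun i : Fin (2 * k) => ¬ (i : ℕ) < k)) := by
  constructor
  · intro x hx y hy
    simp only [Finset.mem_filter] at hx hy
    simp only [G0]
    tauto
  · intro v hv
    simp only [Finset.mem_filter, Finset.mem_univ, true_and, not_not] at hv
    have hset : (G0 k).neighborSet v ∩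
        ((Finset.univ.filter (fun i : Fin (2 * k) => ¬ (i : ℕ) < k) : Finset _) : Set _) =
        ((Finset.univ.filter (fun i : Fin (2 * k) => ¬ (i : ℕ) < k) : Finset _) : Set _) := by
      ext u
      simp only [Set.mem_inter_iff, mem_neighborSet, Finset.coe_filter, Set.mem_setOf_eq,
        Finset.mem_univ, true_and, G0]
      tauto
    rw [hset, Set.ncard_coe_finset]
    have : (Finset.univ.filter (fun i : Fin (2 * k) => ¬ (i : ℕ) < k)).card = k := by
      have h1 := cardA k
      have h2 : (Finset.univ.filter (fun i : Fin (2 * k) => (i : ℕ) < k)).card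
          + (Finset.univ.filter (fun i : Fin (2 * k) => ¬ (i : ℕ) < k)).card
          = Fintype.card (Fin (2 * k)) := by
        rw [← Finset.card_univ]
        exact Finset.card_filter_add_card_filter_not _
      rw [h1, Fintype.card_fin] at h2
      omega
    omega

lemma exists_graph (k : ℕ) (hk : 1 ≤ k) :
    ∃ G : SimpleGraph (Fin (2 * k)), 2 ≤ numKDIS G k := by
  refine ⟨G0 k, ?_⟩
  have hne : (Finset.univ.filter (fun i : Fin (2 * k) => (i : ℕ) < k)) ≠
      (Finset.univ.filter (fun i : Fin (2 * k) => ¬ (i : ℕ) < k)) := by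
    intro h
    have h0 : (⟨0, by omega⟩ : Fin (2 * k)) ∈
        Finset.univ.filter (fun i : Fin (2 * k) => (i : ℕ) < k) := by
      simp; omega
    rw [h] at h0
    simp at h0
    omega
  have : Nontrivial {D : Finset (Fin (2 * k)) // IsKDIS (G0 k) k D} :=
    ⟨⟨⟨_, DA_isKDIS k⟩, ⟨_, DB_isKDIS k⟩, by simpa using hne⟩⟩
  have h2 := Finite.one_lt_card_iff_nontrivial.mpr this
  unfold numKDIS
  omega

theorem mDIS_two (k : ℕ) (hk : 1 ≤ k) : mDIS k 2 = 2 * k := by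
  unfold mDIS
  apply le_antisymm
  · exact Nat.sInf_le (exists_graph k hk)
  · apply le_csInf ⟨2 * k, exists_graph k hk⟩
    rintro n ⟨G, hG⟩
    by_contra hlt
    push_neg at hlt
    have hsub : Subsingleton {D : Finset (Fin n) // IsKDIS G k D} := by
      constructor
      rintro ⟨D1, h1⟩ ⟨D2, h2⟩
      ext1
      by_contra hne
      have := key_lem hk h1 h2 hne
      simp [Fintype.card_fin] at this
      omega
    have : numKDIS G k ≤ 1 := by
      unfold numKDIS
      exact Finite.card_le_one_iff_subsingleton.mpr hsub
    omega
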